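/- The lattice K has determinant 3² = 9 (the Gram matrix of any ℤ-basis of K has determinant 9), the quotient K*/K of its dual lattice by K is isomorphic as an abelian group to ℤ/3ℤ × ℤ/3ℤ, and K has level 3, i.e., 3K* ⊆ K. -/

import Mathlib

/-- The rank-4 lattice `K ⊆ ℚ⁴`: all coordinates in `ℤ` or all in `ℤ + 1/2`,
with even coordinate sum. -/
def Klat : Set (Fin 4 → ℚ) :=
  {m | ((∀ i, ∃ k : ℤ, m i = k) ∨ (∀ i, ∃ k : ℤ, m i = k + 1 / 2)) ∧
    ∃ k : ℤ, ∑ i, m i = 2 * k}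

/-- The bilinear form on `K`, whose quadratic form is `m₁² + m₂² + 3m₃² + 3m₄²`. -/
def bK (u v : Fin 4 → ℚ) : ℚ := u 0 * v 0 + u 1 * v 1 + 3 * (u 2 * v 2) + 3 * (u 3 * v 3)

/-- Since `K` has full rank in `ℚ⁴`, the dual lattice `K*` consists of the
vectors of `ℚ⁴` pairing integrally with `K`. -/
def Kdual : Set (Fin 4 → ℚ) := {y | ∀ x ∈ Klat, ∃ k : ℤ, bK y x = k}

/-- `K` as an additive subgroup of `ℚ⁴`. -/
def KlatSub : AddSubgroup (Fin 4 → ℚ) where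
  carrier := Klat
  zero_mem' := ⟨Or.inl fun _ => ⟨0, by simp⟩, 0, by simp⟩
  add_mem' := by
    rintro x y ⟨hx, kx, hkx⟩ ⟨hy, ky, hky⟩
    constructor
    · rcases hx with hx | hx <;> rcases hy with hy | hy
      · exact Or.inl fun i => by
          obtain ⟨a, ha⟩ := hx i; obtain ⟨b, hb⟩ := hy i
          exact ⟨a + b, by simp [ha, hb]⟩
      · exact Or.inr fun i => by
          obtain ⟨a, ha⟩ := hx i; obtain ⟨b, hb⟩ := hy i
          exact ⟨a + b, by simp [ha, hb]; ring⟩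
      · exact Or.inr fun i => by
          obtain ⟨a, ha⟩ := hx i; obtain ⟨b, hb⟩ := hy i
          exact ⟨a + b, by simp [ha, hb]; ring⟩
      · exact Or.inl fun i => by
          obtain ⟨a, ha⟩ := hx i; obtain ⟨b, hb⟩ := hy i
          exact ⟨a + b + 1, by simp [ha, hb]; ring⟩
    · exact ⟨kx + ky, by
        simp only [Pi.add_apply, Finset.sum_add_distrib, hkx, hky]; push_cast; ring⟩
  neg_mem' := by
    rintro x ⟨hx, kx, hkx⟩
    constructor
    · rcases hx with hx | hx
      · exact Or.inl fun i => by
          obtain ⟨a, ha⟩ := hx i; exact ⟨-a, by simp [ha]⟩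
      · exact Or.inr fun i => by
          obtain ⟨a, ha⟩ := hx i
          exact ⟨-a - 1, by simp [ha]; ring⟩
    · exact ⟨-kx, by
        simp only [Pi.neg_apply, Finset.sum_neg_distrib, hkx]; push_cast; ring⟩

/-- `K*` as an additive subgroup of `ℚ⁴`. -/
def KdualSub : AddSubgroup (Fin 4 → ℚ) where
  carrier := Kdual
  zero_mem' := fun x _ => ⟨0, by simp [bK]⟩
  add_mem' := by
    intro a b ha hb x hx
    obtain ⟨k, hk⟩ := ha x hx; obtain ⟨l, hl⟩ := hb x hx
    exact ⟨k + l, by simp only [bK, Pi.add_apply] at *; push_cast; linarith⟩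
  neg_mem' := by
    intro a ha x hx
    obtain ⟨k, hk⟩ := ha x hx
    exact ⟨-k, by simp only [bK, Pi.neg_apply] at *; push_cast; linarith⟩


def uB : Fin 4 → (Fin 4 → ℚ) :=
  ![![1,1,0,0], ![1,-1,0,0], ![0,1,1,0], ![1/2,1/2,1/2,1/2]]

lemma klat_iff (x : Fin 4 → ℚ) :
    x ∈ Klat ↔ ∃ c : Fin 4 → ℤ, x = ∑ i, (c i : ℚ) • uB i := by
  constructor
  · rintro ⟨hx, m, hm⟩
    rw [Fin.sum_univ_four] at hm
    rcases hx with hx | hx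
    · obtain ⟨k0, h0⟩ := hx 0; obtain ⟨k1, h1⟩ := hx 1
      obtain ⟨k2, h2⟩ := hx 2; obtain ⟨k3, h3⟩ := hx 3
      rw [h0, h1, h2, h3] at hm
      have hk : (k0:ℚ) + k1 + k2 + k3 = 2 * m := by push_cast at hm ⊢; linarith
      refine ⟨![m - k2 - k3, m - k1 - k3, k2 - k3, 2*k3], ?_⟩
      funext i
      fin_cases i <;>
        simp [Fin.sum_univ_four, uB, h0, h1, h2, h3] <;> push_cast <;> linarith
    · obtain ⟨k0, h0⟩ := hx 0; obtain ⟨k1, h1⟩ := hx 1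
      obtain ⟨k2, h2⟩ := hx 2; obtain ⟨k3, h3⟩ := hx 3
      rw [h0, h1, h2, h3] at hm
      have hk : (k0:ℚ) + k1 + k2 + k3 + 2 = 2 * m := by push_cast at hm ⊢; linarith
      refine ⟨![m - 1 - k2 - k3, m - 1 - k1 - k3, k2 - k3, 2*k3 + 1], ?_⟩
      funext i
      fin_cases i <;>
        simp [Fin.sum_univ_four, uB, h0, h1, h2, h3] <;> push_cast <;> linarith
  · rintro ⟨c, rfl⟩
    constructor
    · rcases Int.even_or_odd (c 3) with ⟨d, hd⟩ | ⟨d, hd⟩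
      · refine Or.inl fun i => ?_
        fin_cases i
        · exact ⟨c 0 + c 1 + d, by simp [Fin.sum_univ_four, uB, hd]; push_cast; ring⟩
        · exact ⟨c 0 - c 1 + c 2 + d, by simp [Fin.sum_univ_four, uB, hd]; push_cast; ring⟩
        · exact ⟨c 2 + d, by simp [Fin.sum_univ_four, uB, hd]; push_cast; ring⟩
        · exact ⟨d, by simp [Fin.sum_univ_four, uB, hd]; push_cast; ring⟩
      · refine Or.inr fun i => ?_
        fin_cases i
        · exact ⟨c 0 + c 1 + d, by simp [Fin.sum_univ_four, uB, hd]; push_cast; ring⟩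
        · exact ⟨c 0 - c 1 + c 2 + d, by simp [Fin.sum_univ_four, uB, hd]; push_cast; ring⟩
        · exact ⟨c 2 + d, by simp [Fin.sum_univ_four, uB, hd]; push_cast; ring⟩
        · exact ⟨d, by simp [Fin.sum_univ_four, uB, hd]; push_cast; ring⟩
    · refine ⟨c 0 + c 2 + c 3, ?_⟩
      simp [Fin.sum_univ_four, uB]; push_cast; ring

lemma uB_mem (j : Fin 4) : uB j ∈ Klat := by
  rw [klat_iff]
  exact ⟨fun i => if i = j then 1 else 0, by
    funext k
    fin_cases j <;> simp [Fin.sum_univ_four, uB]⟩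

lemma kdual_iff (y : Fin 4 → ℚ) :
    y ∈ Kdual ↔ ∃ p q r t : ℤ, y 0 = (p + q) / 2 ∧ y 1 = (p - q) / 2 ∧
      y 2 = (2 * r - p + q) / 6 ∧ y 3 = (4 * t - p - q - 2 * r) / 6 := by
  constructor
  · intro hy
    obtain ⟨a1, h1⟩ := hy (uB 0) (uB_mem 0)
    obtain ⟨a2, h2⟩ := hy (uB 1) (uB_mem 1)
    obtain ⟨a3, h3⟩ := hy (uB 2) (uB_mem 2)
    obtain ⟨a4, h4⟩ := hy (uB 3) (uB_mem 3)
    simp [bK, uB] at h1 h2 h3 h4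
    exact ⟨a1, a2, a3, a4, by linarith, by linarith, by linarith, by linarith⟩
  · rintro ⟨p, q, r, t, h0, h1, h2, h3⟩ x hx
    rw [klat_iff] at hx
    obtain ⟨c, rfl⟩ := hx
    refine ⟨c 0 * p + c 1 * q + c 2 * r + c 3 * t, ?_⟩
    simp [bK, Fin.sum_univ_four, uB, h0, h1, h2, h3]
    push_cast
    ring

lemma klat_level (y : Fin 4 → ℚ) (p q r t : ℤ) (h0 : y 0 = (p + q) / 2)
    (h1 : y 1 = (p - q) / 2) (h2 : y 2 = (2 * r - p + q) / 6)
    (h3 : y 3 = (4 * t - p - q - 2 * r) / 6) : (3 : ℚ) • y ∈ Klat := by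
  rcases Int.even_or_odd (p + q) with ⟨a, ha⟩ | ⟨a, ha⟩
  · have ha' : (p : ℚ) + q = a + a := by exact_mod_cast congrArg (Int.cast : ℤ → ℚ) ha
    refine ⟨Or.inl fun i => ?_, p + t, ?_⟩
    · fin_cases i
      · exact ⟨3 * a, by simp [h0]; push_cast; linarith⟩
      · exact ⟨3 * (p - a), by simp [h1]; push_cast; linarith⟩
      · exact ⟨r + a - p, by simp [h2]; push_cast; linarith⟩
      · exact ⟨2 * t - a - r, by simp [h3]; push_cast; linarith⟩
    · simp [Fin.sum_univ_four, h0, h1, h2, h3]; push_cast; linarith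
  · have ha' : (p : ℚ) + q = 2 * a + 1 := by exact_mod_cast congrArg (Int.cast : ℤ → ℚ) ha
    refine ⟨Or.inr fun i => ?_, p + t, ?_⟩
    · fin_cases i
      · exact ⟨3 * a + 1, by simp [h0]; push_cast; linarith⟩
      · exact ⟨3 * (p - a) - 2, by simp [h1]; push_cast; linarith⟩
      · exact ⟨r + a - p, by simp [h2]; push_cast; linarith⟩
      · exact ⟨2 * t - a - r - 1, by simp [h3]; push_cast; linarith⟩
    · simp [Fin.sum_univ_four, h0, h1, h2, h3]; push_cast; linarith

lemma klat_of_dvd (y : Fin 4 → ℚ) (p q r t : ℤ) (h0 : y 0 = (p + q) / 2)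
    (h1 : y 1 = (p - q) / 2) (h2 : y 2 = (2 * r - p + q) / 6)
    (h3 : y 3 = (4 * t - p - q - 2 * r) / 6)
    (d2 : (3:ℤ) ∣ (2 * r - p + q)) (d3 : (3:ℤ) ∣ (4 * t - p - q - 2 * r)) :
    y ∈ Klat := by
  obtain ⟨s, hs⟩ := d2
  obtain ⟨s', hs'⟩ := d3
  have hsq : 2 * (r:ℚ) - p + q = 3 * s := by exact_mod_cast congrArg (Int.cast : ℤ → ℚ) hs
  have hsq' : 4 * (t:ℚ) - p - q - 2 * r = 3 * s' := by
    exact_mod_cast congrArg (Int.cast : ℤ → ℚ) hs'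
  have hy2 : y 2 = (s : ℚ) / 2 := by rw [h2, hsq]; ring
  have hy3 : y 3 = (s' : ℚ) / 2 := by rw [h3, hsq']; ring
  rcases Int.even_or_odd (p + q) with ⟨a, ha⟩ | ⟨a, ha⟩
  · have ha' : (p : ℚ) + q = a + a := by exact_mod_cast congrArg (Int.cast : ℤ → ℚ) ha
    obtain ⟨e, he⟩ : ∃ e, s = 2 * e := ⟨s / 2, by omega⟩
    obtain ⟨e', he'⟩ : ∃ e, s' = 2 * e := ⟨s' / 2, by omega⟩
    have hsum : (p : ℚ) + e + e' = 2 * ((p + e + e' : ℤ) / 2 : ℤ) := by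
      exact_mod_cast congrArg (Int.cast : ℤ → ℚ) (by omega : p + e + e' = 2 * ((p + e + e') / 2))
    refine ⟨Or.inl fun i => ?_, (p + e + e') / 2, ?_⟩
    · fin_cases i
      · exact ⟨a, by simp [h0]; push_cast; linarith⟩
      · exact ⟨p - a, by simp [h1]; push_cast; linarith⟩
      · exact ⟨e, by simp [hy2, he]; try push_cast; try ring⟩
      · exact ⟨e', by simp [hy3, he']; try push_cast; try ring⟩
    · rw [Fin.sum_univ_four, h0, h1, hy2, hy3]
      push_cast [he, he'] at hsum ⊢
      linarith
  · have ha' : (p : ℚ) + q = 2 * a + 1 := by exact_mod_cast congrArg (Int.cast : ℤ → ℚ) ha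
    obtain ⟨e, he⟩ : ∃ e, s = 2 * e + 1 := ⟨s / 2, by omega⟩
    obtain ⟨e', he'⟩ : ∃ e, s' = 2 * e + 1 := ⟨s' / 2, by omega⟩
    have hsum : (p : ℚ) + e + e' + 1 = 2 * ((p + e + e' + 1 : ℤ) / 2 : ℤ) := by
      exact_mod_cast congrArg (Int.cast : ℤ → ℚ)
        (by omega : p + e + e' + 1 = 2 * ((p + e + e' + 1) / 2))
    refine ⟨Or.inr fun i => ?_, (p + e + e' + 1) / 2, ?_⟩
    · fin_cases i
      · exact ⟨a, by simp [h0]; push_cast; linarith⟩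
      · exact ⟨p - a - 1, by simp [h1]; push_cast; linarith⟩
      · exact ⟨e, by simp [hy2, he]; try push_cast; try ring⟩
      · exact ⟨e', by simp [hy3, he']; try push_cast; try ring⟩
    · rw [Fin.sum_univ_four, h0, h1, hy2, hy3]
      push_cast [he, he'] at hsum ⊢
      linarith


lemma kdual_six (y : Fin 4 → ℚ) (hy : y ∈ Kdual) :
    (∃ k : ℤ, 6 * y 2 = k) ∧ (∃ k : ℤ, 6 * y 3 = k) := by
  obtain ⟨p, q, r, t, _, _, h2, h3⟩ := (kdual_iff y).mp hy
  exact ⟨⟨2*r - p + q, by rw [h2]; push_cast; ring⟩,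
    ⟨4*t - p - q - 2*r, by rw [h3]; push_cast; ring⟩⟩

/-- The discriminant-group homomorphism `K* → ℤ/3 × ℤ/3`. -/
noncomputable def fmap : KdualSub →+ ZMod 3 × ZMod 3 where
  toFun y := (((⌊6 * y.1 2⌋ : ℤ) : ZMod 3), ((⌊6 * y.1 3⌋ : ℤ) : ZMod 3))
  map_zero' := by
    have h2 : ((0 : KdualSub) : Fin 4 → ℚ) 2 = 0 := rfl
    have h3 : ((0 : KdualSub) : Fin 4 → ℚ) 3 = 0 := rfl
    simp [h2, h3]
  map_add' a b := by
    show ((((⌊6 * (a + b).1 2⌋ : ℤ) : ZMod 3), ((⌊6 * (a + b).1 3⌋ : ℤ) : ZMod 3)) : ZMod 3 × ZMod 3)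
      = (((⌊6 * a.1 2⌋ : ℤ) : ZMod 3), ((⌊6 * a.1 3⌋ : ℤ) : ZMod 3))
        + (((⌊6 * b.1 2⌋ : ℤ) : ZMod 3), ((⌊6 * b.1 3⌋ : ℤ) : ZMod 3))
    obtain ⟨⟨ka, hka⟩, ⟨la, hla⟩⟩ := kdual_six a.1 a.2
    obtain ⟨⟨kb, hkb⟩, ⟨lb, hlb⟩⟩ := kdual_six b.1 b.2
    have e2 : (6 : ℚ) * (a + b).1 2 = ((ka + kb : ℤ) : ℚ) := by
      have : (a + b).1 2 = a.1 2 + b.1 2 := rfl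
      rw [this]; push_cast; linarith
    have e3 : (6 : ℚ) * (a + b).1 3 = ((la + lb : ℤ) : ℚ) := by
      have : (a + b).1 3 = a.1 3 + b.1 3 := rfl
      rw [this]; push_cast; linarith
    have : (⌊6 * (a + b).1 2⌋ = ka + kb) ∧ (⌊6 * (a + b).1 3⌋ = la + lb) := by
      rw [e2, e3, Int.floor_intCast, Int.floor_intCast]; exact ⟨rfl, rfl⟩
    rw [this.1, this.2, hka, hkb, hla, hlb, Int.floor_intCast, Int.floor_intCast,
      Int.floor_intCast, Int.floor_intCast]
    simp only [Prod.mk_add_mk, Prod.ext_iff, Int.cast_add]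
    try exact ⟨rfl, rfl⟩

lemma fmap_ker : KlatSub.addSubgroupOf KdualSub = fmap.ker := by
  ext y
  rw [AddSubgroup.mem_addSubgroupOf, AddMonoidHom.mem_ker]
  constructor
  · rintro ⟨h, -⟩
    have d : (3:ℤ) ∣ ⌊6 * y.1 2⌋ ∧ (3:ℤ) ∣ ⌊6 * y.1 3⌋ := by
      rcases h with h | h
      · obtain ⟨k2, h2⟩ := h 2; obtain ⟨k3, h3⟩ := h 3
        have e2 : (6:ℚ) * y.1 2 = ((6 * k2 : ℤ) : ℚ) := by rw [h2]; push_cast; ring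
        have e3 : (6:ℚ) * y.1 3 = ((6 * k3 : ℤ) : ℚ) := by rw [h3]; push_cast; ring
        rw [e2, e3, Int.floor_intCast, Int.floor_intCast]
        exact ⟨⟨2 * k2, by ring⟩, ⟨2 * k3, by ring⟩⟩
      · obtain ⟨k2, h2⟩ := h 2; obtain ⟨k3, h3⟩ := h 3
        have e2 : (6:ℚ) * y.1 2 = ((6 * k2 + 3 : ℤ) : ℚ) := by rw [h2]; push_cast; ring
        have e3 : (6:ℚ) * y.1 3 = ((6 * k3 + 3 : ℤ) : ℚ) := by rw [h3]; push_cast; ring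
        rw [e2, e3, Int.floor_intCast, Int.floor_intCast]
        exact ⟨⟨2 * k2 + 1, by ring⟩, ⟨2 * k3 + 1, by ring⟩⟩
    show ((((⌊6 * y.1 2⌋ : ℤ) : ZMod 3), ((⌊6 * y.1 3⌋ : ℤ) : ZMod 3)) : ZMod 3 × ZMod 3) = 0
    rw [Prod.ext_iff]
    exact ⟨(ZMod.intCast_zmod_eq_zero_iff_dvd _ 3).mpr d.1,
      (ZMod.intCast_zmod_eq_zero_iff_dvd _ 3).mpr d.2⟩
  · intro h0
    obtain ⟨p, q, r, t, h0', h1', h2', h3'⟩ := (kdual_iff y.1).mp y.2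
    have e2 : (6:ℚ) * y.1 2 = ((2*r - p + q : ℤ) : ℚ) := by rw [h2']; push_cast; ring
    have e3 : (6:ℚ) * y.1 3 = ((4*t - p - q - 2*r : ℤ) : ℚ) := by rw [h3']; push_cast; ring
    have h0'' : ((((⌊6 * y.1 2⌋ : ℤ) : ZMod 3), ((⌊6 * y.1 3⌋ : ℤ) : ZMod 3)) : ZMod 3 × ZMod 3) = 0 := h0
    rw [e2, e3, Int.floor_intCast, Int.floor_intCast, Prod.ext_iff] at h0''
    have d2 := (ZMod.intCast_zmod_eq_zero_iff_dvd _ 3).mp h0''.1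
    have d3 := (ZMod.intCast_zmod_eq_zero_iff_dvd _ 3).mp h0''.2
    exact klat_of_dvd y.1 p q r t h0' h1' h2' h3' d2 d3

lemma fmap_surj : Function.Surjective fmap := by
  have hW1 : (![0,0,2/3,-2] : Fin 4 → ℚ) ∈ Kdual := by
    rw [kdual_iff]
    exact ⟨0, 0, 2, -2, by norm_num, by norm_num, by norm_num; rfl, by norm_num; rfl⟩
  have hW2 : (![0,0,0,2/3] : Fin 4 → ℚ) ∈ Kdual := by
    rw [kdual_iff]
    exact ⟨0, 0, 0, 1, by norm_num, by norm_num, by norm_num; rfl, by norm_num; rfl⟩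
  have hf1 : fmap ⟨_, hW1⟩ = (1, 0) := by
    show ((((⌊(6:ℚ) * (2/3)⌋ : ℤ) : ZMod 3), ((⌊(6:ℚ) * (-2)⌋ : ℤ) : ZMod 3)) : ZMod 3 × ZMod 3) = (1, 0)
    norm_num
    try constructor <;> decide
  have hf2 : fmap ⟨_, hW2⟩ = (0, 1) := by
    show ((((⌊(6:ℚ) * (0:ℚ)⌋ : ℤ) : ZMod 3), ((⌊(6:ℚ) * (2/3)⌋ : ℤ) : ZMod 3)) : ZMod 3 × ZMod 3) = (0, 1)
    norm_num
    try constructor <;> decide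
  intro z
  refine ⟨(z.1.val : ℤ) • ⟨_, hW1⟩ + (z.2.val : ℤ) • ⟨_, hW2⟩, ?_⟩
  rw [map_add, map_zsmul, map_zsmul, hf1, hf2]
  have hv : ∀ a : ZMod 3, ((a.val : ℤ) : ZMod 3) = a := by decide
  ext
  · show (z.1.val : ℤ) • (1 : ZMod 3) + (z.2.val : ℤ) • (0 : ZMod 3) = z.1
    rw [zsmul_eq_mul, zsmul_eq_mul, mul_one, mul_zero, add_zero, hv]
  · show (z.1.val : ℤ) • (0 : ZMod 3) + (z.2.val : ℤ) • (1 : ZMod 3) = z.2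
    rw [zsmul_eq_mul, zsmul_eq_mul, mul_one, mul_zero, zero_add, hv]


lemma detU : (Matrix.of uB).det = -1 := by
  have h : (Fin.succAbove 1 2 : Fin 4) = 3 := by decide
  simp [Matrix.det_succ_row_zero, Fin.sum_univ_succ, uB, h]
  norm_num

/-- `K` has determinant `9` (the Gram matrix of any `ℤ`-basis of `K`
has determinant `9`), the quotient `K*/K` is isomorphic as an abelian group to
`ℤ/3ℤ × ℤ/3ℤ`, and `K` has level `3`, i.e. `3K* ⊆ K`. -/
theorem Klat_det_discriminantGroup_level :
    (∀ b : Fin 4 → (Fin 4 → ℚ),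
      (∀ x, x ∈ Klat ↔ ∃ c : Fin 4 → ℤ, x = ∑ i, (c i : ℚ) • b i) →
      Matrix.det (Matrix.of fun i j => bK (b i) (b j)) = 9) ∧
    Nonempty ((KdualSub ⧸ KlatSub.addSubgroupOf KdualSub) ≃+ ZMod 3 × ZMod 3) ∧
    (∀ y ∈ Kdual, (3 : ℚ) • y ∈ Klat) := by
  refine ⟨?_, ?_, ?_⟩
  · intro b h
    classical
    have hbK : ∀ i, b i ∈ Klat := by
      intro i
      refine (h (b i)).mpr ⟨fun j => if j = i then 1 else 0, ?_⟩
      simp [apply_ite (Int.cast : ℤ → ℚ), ite_smul, Finset.sum_ite_eq']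
    choose Q hQ using fun i => (klat_iff (b i)).mp (hbK i)
    choose P hP using fun j => (h (uB j)).mp (uB_mem j)
    set Um : Matrix (Fin 4) (Fin 4) ℚ := Matrix.of uB with hUm
    set Bm : Matrix (Fin 4) (Fin 4) ℚ := Matrix.of b with hBm
    set Qm : Matrix (Fin 4) (Fin 4) ℚ := Matrix.of (fun i j => ((Q i j : ℚ))) with hQm
    set Pm : Matrix (Fin 4) (Fin 4) ℚ := Matrix.of (fun i j => ((P i j : ℚ))) with hPm
    have hBQ : Bm = Qm * Um := by
      ext i k
      have hq := congrFun (hQ i) k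
      simp only [Finset.sum_apply, Pi.smul_apply, smul_eq_mul, Fin.sum_univ_four] at hq
      simp only [hBm, hQm, hUm, Matrix.mul_apply, Matrix.of_apply, Fin.sum_univ_four]
      exact hq
    have hUP : Um = Pm * Bm := by
      ext i k
      have hp := congrFun (hP i) k
      simp only [Finset.sum_apply, Pi.smul_apply, smul_eq_mul, Fin.sum_univ_four] at hp
      simp only [hBm, hPm, hUm, Matrix.mul_apply, Matrix.of_apply, Fin.sum_univ_four]
      exact hp
    have hUnit : IsUnit Um.det := by rw [detU]; exact isUnit_one.neg
    have hPQ : Pm * Qm = 1 := by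
      have h1 : (Pm * Qm) * Um = Um := by rw [Matrix.mul_assoc, ← hBQ, ← hUP]
      calc Pm * Qm = (Pm * Qm) * (Um * Um⁻¹) := by
            rw [Matrix.mul_nonsing_inv _ hUnit, Matrix.mul_one]
        _ = Um * Um⁻¹ := by rw [← Matrix.mul_assoc, h1]
        _ = 1 := Matrix.mul_nonsing_inv _ hUnit
    have hdet1 : Pm.det * Qm.det = 1 := by rw [← Matrix.det_mul, hPQ, Matrix.det_one]
    have hQint : Qm.det = (((Matrix.of Q).det : ℤ) : ℚ) := by
      have hmd := RingHom.map_det (Int.castRingHom ℚ) (Matrix.of Q)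
      rw [show ((Int.castRingHom ℚ).mapMatrix (Matrix.of Q) : Matrix (Fin 4) (Fin 4) ℚ)
          = Matrix.of (fun i j => ((Q i j : ℚ))) from rfl] at hmd
      exact_mod_cast hmd.symm
    have hPint : Pm.det = (((Matrix.of P).det : ℤ) : ℚ) := by
      have hmd := RingHom.map_det (Int.castRingHom ℚ) (Matrix.of P)
      rw [show ((Int.castRingHom ℚ).mapMatrix (Matrix.of P) : Matrix (Fin 4) (Fin 4) ℚ)
          = Matrix.of (fun i j => ((P i j : ℚ))) from rfl] at hmd
      exact_mod_cast hmd.symm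
    have hZ : ((Matrix.of P).det : ℤ) * (Matrix.of Q).det = 1 := by
      have := hdet1
      rw [hQint, hPint] at this
      exact_mod_cast this
    have hq1 : (Matrix.of Q).det = 1 ∨ (Matrix.of Q).det = -1 :=
      Int.isUnit_iff.mp (IsUnit.of_mul_eq_one _ (by rw [mul_comm] at hZ; exact hZ))
    have hq2 : Qm.det * Qm.det = 1 := by
      rcases hq1 with hq1 | hq1 <;> rw [hQint, hq1] <;> norm_num
    have hGram : (Matrix.of fun i j => bK (b i) (b j))
        = Bm * Matrix.diagonal ![1,1,3,3] * Bm.transpose := by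
      ext i j
      simp [Matrix.mul_apply, Fin.sum_univ_four, Matrix.diagonal_apply,
        Matrix.transpose_apply, hBm, bK]
      ring
    rw [hGram, Matrix.det_mul, Matrix.det_mul, Matrix.det_transpose, Matrix.det_diagonal,
      hBQ, Matrix.det_mul, detU, Fin.prod_univ_four]
    norm_num
    have e : (![1,1,3,3] : Fin 4 → ℚ) 2 * ![1,1,3,3] 3 = 9 := by
      show (3:ℚ) * 3 = 9; norm_num
    linear_combination Qm.det ^ 2 * e + (9 : ℚ) * hq2
  · exact ⟨(QuotientAddGroup.quotientAddEquivOfEq fmap_ker).trans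
      (QuotientAddGroup.quotientKerEquivOfSurjective fmap fmap_surj)⟩
  · intro y hy
    obtain ⟨p, q, r, t, h0, h1, h2, h3⟩ := (kdual_iff y).mp hy
    exact klat_level y p q r t h0 h1 h2 h3
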